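/- For real x ≠ 0 and all n ≥ 1, the Oresme polynomial admits the explicit expansion O_n(x) = ∑_{j=0}^{⌊(n−1)/2⌋} (−1)^j · C(n−j−1, j) · x^{−2j−1}, where C denotes the binomial coefficient. -/

import Mathlib

noncomputable def oresme : ℕ → ℝ → ℝ
  | 0 => fun _ => 0
  | 1 => fun x => 1/x
  | (n+2) => fun x => oresme (n+1) x - (1/x^2) * oresme n x

noncomputable def oS (x : ℝ) (n : ℕ) : ℝ :=
  ∑ j ∈ Finset.range ((n-1)/2 + 1),
      (-1 : ℝ)^j * (Nat.choose (n-j-1) j : ℝ) * x^(-(2*(j:ℤ))-1)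

lemma hpow (x : ℝ) (hx : x ≠ 0) (j : ℕ) :
    x ^ (-(2*(j:ℤ))-1) = x⁻¹ * (x⁻¹^2)^j := by
  rw [show -(2*(j:ℤ))-1 = -((2*j+1 : ℕ) : ℤ) by push_cast; ring, zpow_neg,
    zpow_natCast, ← inv_pow]
  ring

lemma oS_rec (x : ℝ) (hx : x ≠ 0) (k : ℕ) :
    oS x (k+3) = oS x (k+2) - (1/x^2) * oS x (k+1) := by
  unfold oS
  have h1 : (k+3-1)/2 + 1 = k/2 + 2 := by omega
  have h3 : (k+1-1)/2 + 1 = k/2 + 1 := by omega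
  rw [h1, h3]
  have h2 : ∑ j ∈ Finset.range ((k+2-1)/2 + 1),
      (-1 : ℝ)^j * (Nat.choose (k+2-j-1) j : ℝ) * x^(-(2*(j:ℤ))-1)
      = ∑ j ∈ Finset.range (k/2 + 2),
      (-1 : ℝ)^j * (Nat.choose (k+2-j-1) j : ℝ) * x^(-(2*(j:ℤ))-1) := by
    apply Finset.sum_subset
    · apply Finset.range_subset_range.2; omega
    · intro j hj hj'
      simp only [Finset.mem_range] at hj hj'
      have : k+2-j-1 < j := by omega
      rw [Nat.choose_eq_zero_of_lt this]
      simp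
  rw [h2]
  rw [Finset.sum_range_succ' _ (k/2+1), Finset.sum_range_succ' (fun j =>
      (-1 : ℝ)^j * (Nat.choose (k+2-j-1) j : ℝ) * x^(-(2*(j:ℤ))-1)) (k/2+1)]
  rw [Finset.mul_sum]
  have hterm : ∀ j ∈ Finset.range (k/2+1),
      (-1 : ℝ)^(j+1) * (Nat.choose (k+3-(j+1)-1) (j+1) : ℝ) * x^(-(2*((j+1:ℕ):ℤ))-1)
      = ((-1 : ℝ)^(j+1) * (Nat.choose (k+2-(j+1)-1) (j+1) : ℝ) * x^(-(2*((j+1:ℕ):ℤ))-1)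
        - 1/x^2 * ((-1 : ℝ)^j * (Nat.choose (k+1-j-1) j : ℝ) * x^(-(2*(j:ℤ))-1))) := by
    intro j hj
    simp only [Finset.mem_range] at hj
    have e1 : k+3-(j+1)-1 = (k-j)+1 := by omega
    have e2 : k+2-(j+1)-1 = k-j := by omega
    have e3 : k+1-j-1 = k-j := by omega
    rw [e1, e2, e3, Nat.choose_succ_succ]
    rw [hpow x hx, hpow x hx]
    push_cast
    field_simp
    have hx2 : x^2 * x⁻¹^2 = 1 := by rw [← mul_pow, mul_inv_cancel₀ hx, one_pow]
    linear_combination (-((k - j).choose j : ℝ) * x⁻¹ ^ (j * 2) * (-1:ℝ) ^ j) * hx2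
  rw [Finset.sum_congr rfl hterm, Finset.sum_sub_distrib]
  simp only [Nat.choose_zero_right, Nat.cast_one]
  ring

lemma oS_one (x : ℝ) : oS x 1 = oresme 1 x := by
  simp [oS, oresme]

lemma oS_two (x : ℝ) : oS x 2 = oresme 2 x := by
  simp [oS, oresme]

lemma oresme_eq_oS (x : ℝ) (hx : x ≠ 0) (n : ℕ) :
    oresme (n+1) x = oS x (n+1) ∧ oresme (n+2) x = oS x (n+2) := by
  induction n with
  | zero => exact ⟨(oS_one x).symm, (oS_two x).symm⟩
  | succ k ih =>
    refine ⟨ih.2, ?_⟩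
    show oresme (k+3) x = oS x (k+3)
    rw [show oresme (k+3) x = oresme (k+2) x - (1/x^2) * oresme (k+1) x from rfl,
      oS_rec x hx k, ih.1, ih.2]

theorem oresme_explicit (x : ℝ) (hx : x ≠ 0) (n : ℕ) (hn : 1 ≤ n) :
    oresme n x = ∑ j ∈ Finset.range ((n-1)/2 + 1),
      (-1 : ℝ)^j * (Nat.choose (n-j-1) j : ℝ) * x^(-(2*(j:ℤ))-1) := by
  obtain ⟨k, rfl⟩ := Nat.exists_eq_add_of_le hn
  rw [show 1 + k = k + 1 by ring]
  exact (oresme_eq_oS x hx k).1
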